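/- If a finite point set P ⊂ [0,1)^d with N points is given and j ∈ ℕ₀^d, m ∈ D_j are such that no point of P lies in the interior of the dyadic box I_{j,m}, then the Haar coefficient of the discrepancy function satisfies |μ_{j,m}(D_P)| = N·2^{-2j₁-⋯-2j_d-2d}. -/

import Mathlib

open MeasureTheory

/-- The L∞-normalized Haar function `h_{j,m}` on `[0,1)`. -/
noncomputable def haar1 (j m : ℕ) (x : ℝ) : ℝ :=
  if (m : ℝ) / 2 ^ j ≤ x ∧ x < ((m : ℝ) + 1 / 2) / 2 ^ j then 1
  else if ((m : ℝ) + 1 / 2) / 2 ^ j ≤ x ∧ x < ((m : ℝ) + 1) / 2 ^ j then -1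
  else 0

/-- The discrepancy function of an `N`-point set `P ⊂ [0,1)^d`. -/
noncomputable def discrepancyD (d N : ℕ) (P : Finset (Fin d → ℝ)) (x : Fin d → ℝ) : ℝ :=
  (∑ z ∈ P, (Set.univ.pi (fun i => Set.Ioo (z i) 1)).indicator (fun _ => (1 : ℝ)) x) -
    N * ∏ i, x i

open Set

lemma haar1_eq (j m : ℕ) (t : ℝ) :
    haar1 j m t = (Ico ((m:ℝ)/2^j) (((m:ℝ)+1/2)/2^j)).indicator (fun _ => (1:ℝ)) t
      - (Ico (((m:ℝ)+1/2)/2^j) (((m:ℝ)+1)/2^j)).indicator (fun _ => (1:ℝ)) t := by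
  simp only [haar1, indicator_apply, mem_Ico]
  split_ifs with h1 h2
  · exact absurd h2.1 (not_le.mpr h1.2)
  · ring
  · ring
  · ring

lemma measurable_haar1 (j m : ℕ) : Measurable (haar1 j m) := by
  simp only [funext (haar1_eq j m)]
  exact ((measurable_const.indicator measurableSet_Ico).sub
    (measurable_const.indicator measurableSet_Ico))

lemma abs_haar1_le_one (j m : ℕ) (t : ℝ) : |haar1 j m t| ≤ 1 := by
  unfold haar1; split_ifs <;> norm_num

lemma int_haar_on (j m : ℕ) (S : Set ℝ) (hS : MeasurableSet S) :
    ∫ t in S, haar1 j m t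
      = (volume (S ∩ Ico ((m:ℝ)/2^j) (((m:ℝ)+1/2)/2^j))).toReal
        - (volume (S ∩ Ico (((m:ℝ)+1/2)/2^j) (((m:ℝ)+1)/2^j))).toReal := by
  simp only [funext (haar1_eq j m)]
  rw [integral_sub, setIntegral_indicator measurableSet_Ico,
    setIntegral_indicator measurableSet_Ico, setIntegral_const, setIntegral_const]
  · simp [Measure.restrict_apply hS, measureReal_def]
  · rw [integrable_indicator_iff measurableSet_Ico]
    exact (integrableOn_const_iff (C := (1:ℝ))).mpr (Or.inr ((Measure.restrict_apply_le _ _).trans_lt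
      measure_Ico_lt_top))
  · rw [integrable_indicator_iff measurableSet_Ico]
    exact (integrableOn_const_iff (C := (1:ℝ))).mpr (Or.inr ((Measure.restrict_apply_le _ _).trans_lt
      measure_Ico_lt_top))

lemma haar_bounds (j m : ℕ) (hm : m < 2^j) :
    0 ≤ (m:ℝ)/2^j ∧ (m:ℝ)/2^j < ((m:ℝ)+1/2)/2^j ∧ ((m:ℝ)+1/2)/2^j < ((m:ℝ)+1)/2^j
      ∧ ((m:ℝ)+1)/2^j ≤ 1 := by
  have h2 : (0:ℝ) < 2^j := by positivity
  have hmr : (m:ℝ) + 1 ≤ 2^j := by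
    have : (m:ℝ) + 1 ≤ ((2:ℝ))^j := by exact_mod_cast Nat.succ_le_of_lt hm
    simpa using this
  refine ⟨by positivity, by gcongr; linarith, by gcongr; linarith, ?_⟩
  rw [div_le_one h2]; exact hmr

lemma int_zero (j m : ℕ) (hm : m < 2^j) (z : ℝ)
    (hz : z ≤ (m:ℝ)/2^j ∨ ((m:ℝ)+1)/2^j ≤ z) :
    ∫ t in Ico (0:ℝ) 1, (Ioo z 1).indicator (fun _ => (1:ℝ)) t * haar1 j m t = 0 := by
  obtain ⟨ha, hac, hcb, hb1⟩ := haar_bounds j m hm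
  have key : ∀ t, (Ioo z 1).indicator (fun _ => (1:ℝ)) t * haar1 j m t
      = (Ioo z 1).indicator (haar1 j m) t := by
    intro t; by_cases ht : t ∈ Ioo z 1 <;> simp [ht]
  simp_rw [key]
  rw [setIntegral_indicator measurableSet_Ioo,
    int_haar_on j m _ (measurableSet_Ico.inter measurableSet_Ioo)]
  rcases hz with hz | hz
  · have h1 : volume (Ico (0:ℝ) 1 ∩ Ioo z 1 ∩ Ico ((m:ℝ)/2^j) (((m:ℝ)+1/2)/2^j))
        = ENNReal.ofReal (((m:ℝ)+1/2)/2^j - (m:ℝ)/2^j) := by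
      refine le_antisymm ?_ ?_
      · calc _ ≤ volume (Ico ((m:ℝ)/2^j) (((m:ℝ)+1/2)/2^j)) :=
              measure_mono inter_subset_right
          _ = _ := Real.volume_Ico
      · calc ENNReal.ofReal (((m:ℝ)+1/2)/2^j - (m:ℝ)/2^j)
              = volume (Ioo ((m:ℝ)/2^j) (((m:ℝ)+1/2)/2^j)) := Real.volume_Ioo.symm
          _ ≤ _ := by
              refine measure_mono fun t ht => ?_
              simp only [mem_Ioo, mem_Ico, mem_inter_iff] at *
              refine ⟨⟨⟨by linarith, by linarith⟩, by linarith, by linarith⟩,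
                le_of_lt ht.1, ht.2⟩
    have h2 : volume (Ico (0:ℝ) 1 ∩ Ioo z 1 ∩ Ico (((m:ℝ)+1/2)/2^j) (((m:ℝ)+1)/2^j))
        = ENNReal.ofReal (((m:ℝ)+1)/2^j - (((m:ℝ)+1/2)/2^j)) := by
      refine le_antisymm ?_ ?_
      · calc _ ≤ volume (Ico (((m:ℝ)+1/2)/2^j) (((m:ℝ)+1)/2^j)) :=
              measure_mono inter_subset_right
          _ = _ := Real.volume_Ico
      · calc ENNReal.ofReal (((m:ℝ)+1)/2^j - ((m:ℝ)+1/2)/2^j)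
              = volume (Ioo (((m:ℝ)+1/2)/2^j) (((m:ℝ)+1)/2^j)) := Real.volume_Ioo.symm
          _ ≤ _ := by
              refine measure_mono fun t ht => ?_
              simp only [mem_Ioo, mem_Ico, mem_inter_iff] at *
              refine ⟨⟨⟨by linarith, by linarith⟩, by linarith, by linarith⟩,
                le_of_lt ht.1, ht.2⟩
    rw [h1, h2, ENNReal.toReal_ofReal (by linarith), ENNReal.toReal_ofReal (by linarith)]
    ring
  · have h1 : Ico (0:ℝ) 1 ∩ Ioo z 1 ∩ Ico ((m:ℝ)/2^j) (((m:ℝ)+1/2)/2^j) = ∅ := by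
      refine eq_empty_of_forall_notMem fun t ht => ?_
      simp only [mem_inter_iff, mem_Ico, mem_Ioo] at ht
      linarith [ht.1.2.1, ht.2.2]
    have h2 : Ico (0:ℝ) 1 ∩ Ioo z 1 ∩ Ico (((m:ℝ)+1/2)/2^j) (((m:ℝ)+1)/2^j) = ∅ := by
      refine eq_empty_of_forall_notMem fun t ht => ?_
      simp only [mem_inter_iff, mem_Ico, mem_Ioo] at ht
      linarith [ht.1.2.1, ht.2.2]
    rw [h1, h2]
    simp

lemma int_mono (j m : ℕ) (hm : m < 2^j) :
    ∫ t in Ico (0:ℝ) 1, t * haar1 j m t = -(1/4) * (((2:ℝ)^j)⁻¹)^2 := by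
  obtain ⟨ha, hac, hcb, hb1⟩ := haar_bounds j m hm
  have key : ∀ t, t * haar1 j m t
      = (Ico ((m:ℝ)/2^j) (((m:ℝ)+1/2)/2^j)).indicator (fun t => t) t
        - (Ico (((m:ℝ)+1/2)/2^j) (((m:ℝ)+1)/2^j)).indicator (fun t => t) t := by
    intro t
    rw [haar1_eq]
    simp only [indicator_apply]
    split_ifs <;> ring
  have hint : ∀ u v : ℝ, Integrable ((Ico u v).indicator (fun t => t))
      (volume.restrict (Ico (0:ℝ) 1)) := by
    intro u v
    rw [integrable_indicator_iff measurableSet_Ico]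
    have : IntegrableOn (fun t : ℝ => t) (Ico u v) volume :=
      (continuous_id.integrableOn_Icc).mono_set Ico_subset_Icc_self
    exact this.mono_measure Measure.restrict_le_self
  simp_rw [key]
  rw [integral_sub (hint _ _) (hint _ _),
    setIntegral_indicator measurableSet_Ico, setIntegral_indicator measurableSet_Ico,
    inter_eq_self_of_subset_right (Ico_subset_Ico ha (by linarith)),
    inter_eq_self_of_subset_right (Ico_subset_Ico (by linarith : (0:ℝ) ≤ ((m:ℝ)+1/2)/2^j) hb1),
    integral_Ico_eq_integral_Ioo, integral_Ico_eq_integral_Ioo,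
    ← integral_Ioc_eq_integral_Ioo, ← integral_Ioc_eq_integral_Ioo,
    ← intervalIntegral.integral_of_le hac.le, ← intervalIntegral.integral_of_le hcb.le,
    integral_id, integral_id]
  have h2 : (2:ℝ)^j ≠ 0 := by positivity
  field_simp
  ring

noncomputable def Faux (j m : ℕ) (z : ℝ) : ℝ → ℝ :=
  (Ico (0:ℝ) 1).indicator (fun t => (Ioo z 1).indicator (fun _ => (1:ℝ)) t * haar1 j m t)

noncomputable def Gaux (j m : ℕ) : ℝ → ℝ :=
  (Ico (0:ℝ) 1).indicator (fun t => t * haar1 j m t)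

lemma integrable_ico_ind (f : ℝ → ℝ) (hf : Measurable f) (hb : ∀ t ∈ Ico (0:ℝ) 1, |f t| ≤ 1) :
    Integrable ((Ico (0:ℝ) 1).indicator f) := by
  rw [integrable_indicator_iff measurableSet_Ico]
  refine Integrable.mono' (g := fun _ => (1:ℝ))
    ((integrableOn_const_iff (C := (1:ℝ))).mpr (Or.inr measure_Ico_lt_top)) hf.aestronglyMeasurable ?_
  exact (ae_restrict_iff' measurableSet_Ico).mpr (ae_of_all _ fun t ht => by
    simpa [Real.norm_eq_abs] using hb t ht)

lemma integrable_Faux (j m : ℕ) (z : ℝ) : Integrable (Faux j m z) := by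
  refine integrable_ico_ind _ ((measurable_const.indicator measurableSet_Ioo).mul
    (measurable_haar1 j m)) fun t _ => ?_
  rw [abs_mul]
  refine mul_le_one₀ ?_ (abs_nonneg _) (abs_haar1_le_one j m t)
  by_cases ht : t ∈ Ioo z 1 <;> simp [ht]

lemma integrable_Gaux (j m : ℕ) : Integrable (Gaux j m) := by
  refine integrable_ico_ind _ (measurable_id.mul (measurable_haar1 j m)) fun t ht => ?_
  rw [abs_mul]
  refine mul_le_one₀ ?_ (abs_nonneg _) (abs_haar1_le_one j m t)
  rw [abs_le]; exact ⟨by linarith [ht.1], ht.2.le⟩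

lemma integral_Faux_zero (j m : ℕ) (hm : m < 2^j) (z : ℝ)
    (hz : z ≤ (m:ℝ)/2^j ∨ ((m:ℝ)+1)/2^j ≤ z) : ∫ t, Faux j m z t = 0 := by
  rw [Faux, integral_indicator measurableSet_Ico]
  exact int_zero j m hm z hz

lemma integral_Gaux (j m : ℕ) (hm : m < 2^j) :
    ∫ t, Gaux j m t = -(1/4) * (((2:ℝ)^j)⁻¹)^2 := by
  rw [Gaux, integral_indicator measurableSet_Ico]
  exact int_mono j m hm

lemma two_zpow_sum {ι : Type*} (s : Finset ι) (g : ι → ℤ) :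
    (2:ℝ) ^ (∑ i ∈ s, g i) = ∏ i ∈ s, (2:ℝ) ^ g i := by
  induction s using Finset.cons_induction with
  | empty => simp
  | cons a s ha ih => rw [Finset.sum_cons, Finset.prod_cons,
      zpow_add₀ (by norm_num : (2:ℝ) ≠ 0), ih]


theorem haar_coefficient_discrepancy_empty_box_d (d N : ℕ) (P : Finset (Fin d → ℝ))
    (hP : ↑P ⊆ Set.univ.pi (fun _ : Fin d => Set.Ico (0 : ℝ) 1)) (hcard : P.card = N)
    (j m : Fin d → ℕ) (hm : ∀ i, m i < 2 ^ j i)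
    (hempty : ∀ z ∈ P, z ∉ Set.univ.pi
      (fun i => Set.Ioo ((m i : ℝ) / 2 ^ j i) (((m i : ℝ) + 1) / 2 ^ j i))) :
    |∫ x in Set.univ.pi (fun _ : Fin d => Set.Ico (0 : ℝ) 1),
        discrepancyD d N P x * ∏ i, haar1 (j i) (m i) (x i)|
      = N * (2 : ℝ) ^ (-(2 : ℤ) * ∑ i, (j i : ℤ) - 2 * d) := by
  have hmeasA : MeasurableSet (Set.univ.pi (fun _ : Fin d => Set.Ico (0 : ℝ) 1)) :=
    MeasurableSet.univ_pi fun i => measurableSet_Ico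
  have key : ∀ x : Fin d → ℝ,
      (Set.univ.pi (fun _ : Fin d => Set.Ico (0 : ℝ) 1)).indicator
        (fun x => discrepancyD d N P x * ∏ i, haar1 (j i) (m i) (x i)) x
      = (∑ z ∈ P, ∏ i, Faux (j i) (m i) (z i) (x i)) - N * ∏ i, Gaux (j i) (m i) (x i) := by
    intro x
    by_cases hx : x ∈ Set.univ.pi (fun _ : Fin d => Set.Ico (0 : ℝ) 1)
    · rw [Set.indicator_of_mem hx]
      have hx' : ∀ i, x i ∈ Ico (0:ℝ) 1 := fun i => hx i (Set.mem_univ i)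
      have hF : ∀ (z : Fin d → ℝ) i, Faux (j i) (m i) (z i) (x i)
          = (Ioo (z i) 1).indicator (fun _ => (1:ℝ)) (x i) * haar1 (j i) (m i) (x i) :=
        fun z i => Set.indicator_of_mem (hx' i) _
      have hG : ∀ i, Gaux (j i) (m i) (x i) = x i * haar1 (j i) (m i) (x i) :=
        fun i => Set.indicator_of_mem (hx' i) _
      have hpi : ∀ z : Fin d → ℝ,
          (Set.univ.pi fun i => Set.Ioo (z i) 1).indicator (fun _ => (1:ℝ)) x
            = ∏ i, (Ioo (z i) 1).indicator (fun _ => (1:ℝ)) (x i) := by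
        intro z
        by_cases h : x ∈ Set.univ.pi fun i => Set.Ioo (z i) 1
        · rw [Set.indicator_of_mem h]
          exact (Finset.prod_eq_one fun i _ =>
            Set.indicator_of_mem (h i (Set.mem_univ i)) _).symm
        · rw [Set.indicator_of_notMem h]
          rw [Set.mem_univ_pi] at h; push_neg at h
          obtain ⟨i, hi⟩ := h
          exact (Finset.prod_eq_zero (Finset.mem_univ i)
            (Set.indicator_of_notMem hi _)).symm
      rw [discrepancyD, sub_mul, Finset.sum_mul]
      congr 1
      · refine Finset.sum_congr rfl fun z _ => ?_
        rw [hpi z, ← Finset.prod_mul_distrib]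
        exact Finset.prod_congr rfl fun i _ => (hF z i).symm
      · rw [mul_assoc, ← Finset.prod_mul_distrib]
        congr 1
        exact Finset.prod_congr rfl fun i _ => (hG i).symm
    · rw [Set.indicator_of_notMem hx]
      rw [Set.mem_univ_pi] at hx; push_neg at hx
      obtain ⟨i0, hi0⟩ := hx
      have hF0 : ∀ z : Fin d → ℝ, ∏ i, Faux (j i) (m i) (z i) (x i) = 0 := fun z =>
        Finset.prod_eq_zero (Finset.mem_univ i0) (Set.indicator_of_notMem hi0 _)
      have hG0 : ∏ i, Gaux (j i) (m i) (x i) = 0 :=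
        Finset.prod_eq_zero (Finset.mem_univ i0) (Set.indicator_of_notMem hi0 _)
      rw [Finset.sum_congr rfl fun z _ => hF0 z, hG0, Finset.sum_const_zero]
      ring
  rw [← integral_indicator hmeasA]
  simp_rw [key]
  rw [integral_sub (μ := volume) (integrable_finset_sum _ fun z _ =>
        Integrable.fintype_prod (𝕜 := ℝ) fun i => integrable_Faux (j i) (m i) (z i))
      ((Integrable.fintype_prod (𝕜 := ℝ) fun i => integrable_Gaux (j i) (m i)).const_mul _),
    integral_finset_sum (μ := volume) _ (fun z _ =>
        Integrable.fintype_prod (𝕜 := ℝ) fun i => integrable_Faux (j i) (m i) (z i)),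
    integral_const_mul]
  have hsum : ∀ z ∈ P, ∫ x : Fin d → ℝ, ∏ i, Faux (j i) (m i) (z i) (x i) = 0 := by
    intro z hz
    rw [integral_fintype_prod_volume_eq_prod (ι := Fin d) (fun i => Faux (j i) (m i) (z i))]
    obtain ⟨i0, hi0⟩ : ∃ i, z i ≤ (m i:ℝ)/2^(j i) ∨ ((m i:ℝ)+1)/2^(j i) ≤ z i := by
      have h := hempty z hz
      rw [Set.mem_univ_pi] at h; push_neg at h
      obtain ⟨i, hi⟩ := h
      rw [Set.mem_Ioo, not_and_or, not_lt, not_lt] at hi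
      exact ⟨i, hi⟩
    exact Finset.prod_eq_zero (Finset.mem_univ i0)
      (integral_Faux_zero (j i0) (m i0) (hm i0) (z i0) hi0)
  rw [Finset.sum_eq_zero hsum,
    integral_fintype_prod_volume_eq_prod (ι := Fin d) (fun i => Gaux (j i) (m i))]
  have hG : ∀ i : Fin d, ∫ t, Gaux (j i) (m i) t = (-1) * (2:ℝ)^((-2) * (j i:ℤ) - 2) := by
    intro i
    rw [integral_Gaux (j i) (m i) (hm i),
      show ((-2) * (j i:ℤ) - 2 : ℤ) = -((2*(j i)+2 : ℕ):ℤ) by push_cast; ring,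
      zpow_neg, zpow_natCast, pow_add, pow_mul]
    rw [mul_inv, inv_pow]
    norm_num
    rw [← pow_mul, mul_comm (j i) 2, pow_mul]
    norm_num [mul_comm]
  rw [Finset.prod_congr rfl fun i _ => hG i, Finset.prod_mul_distrib, Finset.prod_const,
    Finset.card_univ, Fintype.card_fin, ← two_zpow_sum]
  have hexp : ∑ i : Fin d, ((-2) * (j i:ℤ) - 2) = -(2:ℤ) * (∑ i, (j i:ℤ)) - 2 * d := by
    rw [Finset.sum_sub_distrib, ← Finset.mul_sum, Finset.sum_const, Finset.card_univ,
      Fintype.card_fin]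
    push_cast; ring
  rw [hexp, zero_sub, abs_neg, abs_mul, abs_mul, abs_pow, abs_neg, abs_one, one_pow,
    one_mul, Nat.abs_cast, abs_of_nonneg (zpow_nonneg (by norm_num) _)]
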